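/- Collapse of the double integral I₄: let 0 < E₀ < E and let Ψ be continuous on [E₀, E]. Then 24 ∫_{E₀}^{E} (E−u)^{−1/2} ( ∫_{E₀}^{u} v^{−1} arctan(√((u−v)/v)) Ψ(v) dv ) du = 24π ∫_{E₀}^{E} ( √E/√v − 1 ) Ψ(v) v^{−1/2} dv, where all integrals converge absolutely. -/

import Mathlib

open Set MeasureTheory Real

lemma intB (c : ℝ) :
    ∫ θ in (0:ℝ)..(π/2), (1 + c^2 * Real.sin θ^2)⁻¹ = π / (2 * Real.sqrt (1+c^2)) := by
  set k := Real.sqrt (1+c^2) with hk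
  have hc2 : (0:ℝ) < 1 + c^2 := by positivity
  have hk2 : k^2 = 1 + c^2 := Real.sq_sqrt hc2.le
  have hk1 : 1 ≤ k := by
    rw [hk]; nlinarith [Real.sq_sqrt hc2.le, Real.sqrt_nonneg (1+c^2)]
  have hkpos : 0 < k := lt_of_lt_of_le one_pos hk1
  set F : ℝ → ℝ := fun θ =>
    (θ + Real.arctan ((k-1) * Real.sin θ * Real.cos θ / (1 + (k-1) * Real.sin θ^2))) / k with hF
  have hden : ∀ θ : ℝ, (0:ℝ) < 1 + (k-1) * Real.sin θ^2 := by
    intro θ; nlinarith [sq_nonneg (Real.sin θ), Real.sin_sq_le_one θ]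
  have hderiv : ∀ θ : ℝ, HasDerivAt F ((1 + c^2 * Real.sin θ^2)⁻¹) θ := by
    intro θ
    have hd := (hden θ).ne'
    have hnum : HasDerivAt (fun θ => (k-1) * Real.sin θ * Real.cos θ)
        ((k-1) * (Real.cos θ * Real.cos θ) + (k-1) * Real.sin θ * (-Real.sin θ)) θ := by
      exact (((Real.hasDerivAt_sin θ).const_mul (k-1)).mul (Real.hasDerivAt_cos θ)).congr_deriv
        (by ring)
    have hden' : HasDerivAt (fun θ => 1 + (k-1) * Real.sin θ^2)
        ((k-1) * (2 * Real.sin θ * Real.cos θ)) θ := by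
      have : HasDerivAt (fun θ => Real.sin θ^2) (2 * Real.sin θ * Real.cos θ) θ := by
        exact ((Real.hasDerivAt_sin θ).pow 2).congr_deriv (by ring)
      exact ((this.const_mul (k-1)).const_add 1).congr_deriv (by ring)
    have hq : HasDerivAt (fun θ => (k-1) * Real.sin θ * Real.cos θ / (1 + (k-1) * Real.sin θ^2))
        ((((k-1) * (Real.cos θ * Real.cos θ) + (k-1) * Real.sin θ * (-Real.sin θ)) *
            (1 + (k-1) * Real.sin θ^2) -
          (k-1) * Real.sin θ * Real.cos θ * ((k-1) * (2 * Real.sin θ * Real.cos θ))) /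
          (1 + (k-1) * Real.sin θ^2)^2) θ := hnum.div hden' hd
    have harc := (Real.hasDerivAt_arctan
        ((k-1) * Real.sin θ * Real.cos θ / (1 + (k-1) * Real.sin θ^2))).comp θ hq
    have h := ((hasDerivAt_id θ).add harc).div_const k
    refine h.congr_deriv ?_
    have hcos : Real.cos θ^2 = 1 - Real.sin θ^2 := by
      have := Real.sin_sq_add_cos_sq θ; linarith
    have h1 : (0:ℝ) < 1 + c^2 * Real.sin θ^2 := by positivity
    have hkne : k ≠ 0 := hkpos.ne'
    have hc2k : c^2 = k^2 - 1 := by linarith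
    have hc4 : Real.cos θ ^ 4 = (1 - Real.sin θ^2)^2 := by rw [← hcos]; ring
    have hC4 : c^4 = (k^2-1)^2 := by rw [show (c:ℝ)^4 = (c^2)^2 by ring, hc2k]
    field_simp
    ring_nf
    simp only [hcos, hc4, hc2k, hC4]
    ring
  have hcont : Continuous fun θ : ℝ => (1 + c^2 * Real.sin θ^2)⁻¹ := by
    refine Continuous.inv₀ (by continuity) fun θ => ?_
    positivity
  have := intervalIntegral.integral_eq_sub_of_hasDerivAt (fun θ _ => hderiv θ)
    (hcont.intervalIntegrable 0 (π/2))
  rw [this, hF]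
  simp [Real.sin_pi_div_two, Real.cos_pi_div_two]
  field_simp

lemma intD (c : ℝ) :
    ∫ θ in (0:ℝ)..(π/2), Real.cos θ^2 / (1 + c^2 * Real.cos θ^2)
      = π / (2 * Real.sqrt (1+c^2) * (1 + Real.sqrt (1+c^2))) := by
  set k := Real.sqrt (1+c^2) with hk
  have hc2 : (0:ℝ) < 1 + c^2 := by positivity
  have hk2 : k^2 = 1 + c^2 := Real.sq_sqrt hc2.le
  have hk1 : 1 ≤ k := by
    rw [hk]; nlinarith [Real.sq_sqrt hc2.le, Real.sqrt_nonneg (1+c^2)]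
  have hkpos : 0 < k := lt_of_lt_of_le one_pos hk1
  have refl : (∫ θ in (0:ℝ)..(π/2), Real.cos θ^2 / (1 + c^2 * Real.cos θ^2))
      = ∫ θ in (0:ℝ)..(π/2), Real.sin θ^2 / (1 + c^2 * Real.sin θ^2) := by
    have h := intervalIntegral.integral_comp_sub_left (a := (0:ℝ)) (b := π/2)
      (fun x => Real.sin x^2 / (1 + c^2 * Real.sin x^2)) (π/2)
    simp only [sub_self, sub_zero, Real.sin_pi_div_two_sub] at h
    exact h
  rw [refl]
  rcases eq_or_ne c 0 with hc | hc
  · subst hc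
    simp only [ne_eq, OfNat.ofNat_ne_zero, not_false_eq_true, zero_pow, zero_mul, add_zero,
      div_one]
    rw [integral_sin_sq]
    have : k = 1 := by simp [hk]
    rw [this]
    simp
    ring
  · have hck : k > 1 := by
      rcases lt_or_eq_of_le hk1 with h | h
      · exact h
      · exfalso; apply hc; nlinarith
    have hcsq : c^2 ≠ 0 := pow_ne_zero 2 hc
    have hpt : ∀ θ : ℝ, Real.sin θ^2 / (1 + c^2 * Real.sin θ^2)
        = (1/c^2) * (1 - (1 + c^2 * Real.sin θ^2)⁻¹) := by
      intro θ
      have hpos : (0:ℝ) < 1 + c^2 * Real.sin θ^2 := by positivity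
      field_simp
      ring
    simp only [hpt]
    rw [intervalIntegral.integral_const_mul]
    have hcont : Continuous fun θ : ℝ => (1 + c^2 * Real.sin θ^2)⁻¹ := by
      refine Continuous.inv₀ (by continuity) fun θ => ?_
      positivity
    rw [intervalIntegral.integral_sub (intervalIntegrable_const)
      (hcont.intervalIntegrable 0 (π/2))]
    rw [intB c, ← hk]
    simp only [intervalIntegral.integral_const, smul_eq_mul, mul_one, sub_zero]
    have h1k : (1:ℝ) + k ≠ 0 := by positivity
    have hc2k : c^2 = k^2 - 1 := by linarith
    rw [hc2k]
    have hkne : k ≠ 0 := hkpos.ne'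
    have hne : k^2 - 1 ≠ 0 := by nlinarith
    field_simp
    ring

lemma hasDerivN (x₀ : ℝ) :
    HasDerivAt (fun x : ℝ => ∫ θ in (0:ℝ)..(π/2), Real.arctan (x * Real.cos θ) * Real.cos θ)
      (π / (2 * Real.sqrt (1+x₀^2) * (1 + Real.sqrt (1+x₀^2)))) x₀ := by
  have key := intervalIntegral.hasDerivAt_integral_of_dominated_loc_of_deriv_le
    (F := fun x θ => Real.arctan (x * Real.cos θ) * Real.cos θ)
    (F' := fun x θ => Real.cos θ^2 / (1 + x^2 * Real.cos θ^2))
    (x₀ := x₀) (a := 0) (b := π/2) (μ := volume) (bound := fun _ => 1)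
    (s := Metric.ball x₀ 1) (Metric.ball_mem_nhds x₀ one_pos)
    (Filter.Eventually.of_forall fun x =>
      ((Continuous.mul (by continuity) Real.continuous_cos).aestronglyMeasurable))
    (((Continuous.mul (by continuity) Real.continuous_cos).intervalIntegrable 0 (π/2)))
    ?_ ?_ (intervalIntegrable_const) ?_
  · rcases key with ⟨-, hd⟩
    rwa [intD x₀] at hd
  · apply Continuous.aestronglyMeasurable
    apply Continuous.div (by continuity) (by continuity)
    intro θ; positivity
  · refine Filter.Eventually.of_forall fun θ => fun _ x _ => ?_
    have h1 : (1:ℝ) ≤ 1 + x^2 * Real.cos θ^2 := by nlinarith [sq_nonneg (x * Real.cos θ)]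
    rw [Real.norm_eq_abs, abs_div, abs_of_nonneg (sq_nonneg (Real.cos θ)),
      abs_of_pos (lt_of_lt_of_le one_pos h1)]
    rw [div_le_one (lt_of_lt_of_le one_pos h1)]
    nlinarith [Real.cos_sq_le_one θ, sq_nonneg (x * Real.cos θ)]
  · refine Filter.Eventually.of_forall fun θ => fun _ x _ => ?_
    have h := (Real.hasDerivAt_arctan (x * Real.cos θ)).comp x
      ((hasDerivAt_id x).mul_const (Real.cos θ))
    have h2 := h.mul_const (Real.cos θ)
    refine h2.congr_deriv ?_
    have : (0:ℝ) < 1 + (x * Real.cos θ)^2 := by positivity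
    field_simp

lemma intN (c : ℝ) :
    ∫ θ in (0:ℝ)..(π/2), Real.arctan (c * Real.cos θ) * Real.cos θ
      = π * c / (2 * (1 + Real.sqrt (1+c^2))) := by
  set N : ℝ → ℝ := fun x => ∫ θ in (0:ℝ)..(π/2), Real.arctan (x * Real.cos θ) * Real.cos θ
  set h : ℝ → ℝ := fun x => π * x / (2 * (1 + Real.sqrt (1+x^2))) with hh
  have hderivh : ∀ x : ℝ, HasDerivAt h (π / (2 * Real.sqrt (1+x^2) * (1 + Real.sqrt (1+x^2)))) x := by
    intro x
    have hpos : (0:ℝ) < 1 + x^2 := by positivity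
    set k := Real.sqrt (1+x^2) with hk
    have hk2 : k^2 = 1 + x^2 := Real.sq_sqrt hpos.le
    have hkpos : 0 < k := Real.sqrt_pos.mpr hpos
    have hsq : HasDerivAt (fun x : ℝ => Real.sqrt (1+x^2)) (x / k) x := by
      have h1 : HasDerivAt (fun x : ℝ => 1 + x^2) (2*x) x := by
        simpa using ((hasDerivAt_pow 2 x).const_add 1)
      have := (Real.hasDerivAt_sqrt hpos.ne').comp x h1
      refine this.congr_deriv ?_
      rw [← hk]; field_simp
    have hden : HasDerivAt (fun x : ℝ => 2 * (1 + Real.sqrt (1+x^2))) (2 * (x/k)) x := by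
      simpa using ((hsq.const_add 1).const_mul 2)
    have hnum : HasDerivAt (fun x : ℝ => π * x) π x := by
      simpa using (hasDerivAt_id x).const_mul π
    have hdenne : 2 * (1 + k) ≠ 0 := by positivity
    have := hnum.div hden hdenne
    refine this.congr_deriv ?_
    have h1k : (1:ℝ) + k ≠ 0 := by positivity
    rw [← hk]
    field_simp
    linear_combination hk2
  have hconst : ∀ x : ℝ, N x - h x = N 0 - h 0 := by
    intro x
    have : ∀ y : ℝ, deriv (fun z => N z - h z) y = 0 := by
      intro y
      refine ((hasDerivN y).sub (hderivh y)).deriv.trans ?_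
      ring
    exact is_const_of_deriv_eq_zero
      (fun y => ((hasDerivN y).sub (hderivh y)).differentiableAt) this x 0
  have hN0 : N 0 = 0 := by simp [N]
  have hh0 : h 0 = 0 := by simp [hh]
  have := hconst c
  rw [hN0, hh0] at this
  have : N c = h c := by linarith
  exact this

set_option maxHeartbeats 1000000 in
lemma intK {v E : ℝ} (hv : 0 < v) (hvE : v < E) :
    ∫ u in v..E, Real.arctan (Real.sqrt ((u - v)/v)) / Real.sqrt (E - u)
      = π * (Real.sqrt E - Real.sqrt v) := by
  set r := Real.sqrt (E - v) with hr
  have hEv : (0:ℝ) < E - v := by linarith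
  have hrpos : 0 < r := Real.sqrt_pos.mpr hEv
  have hr2 : r^2 = E - v := Real.sq_sqrt hEv.le
  clear_value r
  set g : ℝ → ℝ := fun u => Real.arctan (Real.sqrt ((u - v)/v)) / Real.sqrt (E - u) with hg
  set G : ℝ → ℝ := fun s => 2 * Real.arctan (Real.sqrt ((E - s^2 - v)/v)) with hG
  -- Step A: interval to Ioo
  have stepA : (∫ u in v..E, g u) = ∫ u in Ioo v E, g u := by
    rw [intervalIntegral.integral_of_le hvE.le, MeasureTheory.integral_Ioc_eq_integral_Ioo]
  -- Step B: change of variables u = E - s^2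
  have himg : (fun s : ℝ => E - s^2) '' (Ioo 0 r) = Ioo v E := by
    ext u
    simp only [mem_image, mem_Ioo]
    constructor
    · rintro ⟨s, ⟨hs0, hsr⟩, rfl⟩
      have h2 : s^2 < r^2 := by nlinarith
      constructor <;> nlinarith
    · rintro ⟨hu1, hu2⟩
      refine ⟨Real.sqrt (E - u), ⟨Real.sqrt_pos.mpr (by linarith), ?_⟩, ?_⟩
      · rw [hr]
        exact Real.sqrt_lt_sqrt (by linarith) (by linarith)
      · rw [Real.sq_sqrt (by linarith)]; ring
  have hderiv : ∀ s ∈ Ioo (0:ℝ) r, HasDerivWithinAt (fun s : ℝ => E - s^2) (-(2*s)) (Ioo 0 r) s := by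
    intro s _
    exact (((hasDerivAt_pow 2 s).const_sub E).congr_deriv (by ring)).hasDerivWithinAt
  have hinj : InjOn (fun s : ℝ => E - s^2) (Ioo 0 r) := by
    intro s hs t ht h
    simp only at h
    nlinarith [hs.1, ht.1]
  have stepB := integral_image_eq_integral_abs_deriv_smul measurableSet_Ioo hderiv hinj g
  rw [himg] at stepB
  -- Step C: simplify the transformed integrand
  have stepC : (∫ s in Ioo (0:ℝ) r, |(-(2*s))| • g (E - s^2)) = ∫ s in Ioo (0:ℝ) r, G s := by
    refine setIntegral_congr_fun measurableSet_Ioo fun s hs => ?_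
    have hs0 : 0 < s := hs.1
    have h1 : Real.sqrt (E - (E - s^2)) = s := by
      rw [show E - (E - s^2) = s^2 by ring, Real.sqrt_sq hs0.le]
    simp only [hg, hG, smul_eq_mul, h1]
    rw [abs_of_nonpos (by nlinarith)]
    rw [show E - s^2 - v = E - s^2 - v from rfl]
    field_simp
  -- Step D: back to interval integral
  have stepD : (∫ s in Ioo (0:ℝ) r, G s) = ∫ s in (0:ℝ)..r, G s := by
    rw [intervalIntegral.integral_of_le hrpos.le, MeasureTheory.integral_Ioc_eq_integral_Ioo]
  -- Step E: substitution s = r sin θ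
  set c := r / Real.sqrt v with hc
  have hsv : (0:ℝ) < Real.sqrt v := Real.sqrt_pos.mpr hv
  have hcpos : 0 < c := div_pos hrpos hsv
  have hGcont : Continuous G := by
    apply continuous_const.mul
    exact (Real.continuous_arctan.comp (Real.continuous_sqrt.comp (by continuity)))
  have stepE : (∫ θ in (0:ℝ)..(π/2), (r * Real.cos θ) • G (r * Real.sin θ))
      = ∫ s in (0:ℝ)..r, G s := by
    have h := intervalIntegral.integral_comp_smul_deriv
      (f := fun θ : ℝ => r * Real.sin θ) (f' := fun θ : ℝ => r * Real.cos θ)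
      (a := 0) (b := π/2) (g := G)
      (fun x _ => (Real.hasDerivAt_sin x).const_mul r)
      ((continuous_const.mul Real.continuous_cos).continuousOn) hGcont
    simpa using h
  -- Step F: rewrite the θ-integrand
  have stepF : (∫ θ in (0:ℝ)..(π/2), (r * Real.cos θ) • G (r * Real.sin θ))
      = ∫ θ in (0:ℝ)..(π/2), (2*r) * (Real.arctan (c * Real.cos θ) * Real.cos θ) := by
    refine intervalIntegral.integral_congr fun θ hθ => ?_
    rw [uIcc_of_le (by positivity)] at hθ
    have hcosnn : 0 ≤ Real.cos θ := Real.cos_nonneg_of_mem_Icc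
      ⟨by linarith [hθ.1, Real.pi_pos], hθ.2⟩
    have hpyth := Real.sin_sq_add_cos_sq θ
    have harg : E - (r * Real.sin θ)^2 - v = (r * Real.cos θ)^2 := by
      linear_combination -hr2 - r^2 * hpyth
    have hsq : Real.sqrt ((E - (r * Real.sin θ)^2 - v)/v) = c * Real.cos θ := by
      rw [harg, show (r * Real.cos θ)^2 / v = (r * Real.cos θ / Real.sqrt v)^2 by
        rw [div_pow, Real.sq_sqrt hv.le]]
      rw [Real.sqrt_sq (by positivity), hc]
      ring
    simp only [hG, smul_eq_mul, hsq]
    ring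
  rw [stepA, stepB, stepC, stepD, ← stepE, stepF, intervalIntegral.integral_const_mul, intN c]
  -- final algebra
  have hb : (0:ℝ) < Real.sqrt E := Real.sqrt_pos.mpr (by linarith)
  have ha2 : Real.sqrt v ^ 2 = v := Real.sq_sqrt hv.le
  have hb2 : Real.sqrt E ^ 2 = E := Real.sq_sqrt (by linarith : (0:ℝ) ≤ E)
  have h1c : Real.sqrt (1 + c^2) = Real.sqrt E / Real.sqrt v := by
    rw [show (1:ℝ) + c^2 = (Real.sqrt E / Real.sqrt v)^2 by
      rw [hc, div_pow, div_pow, hr2, ha2, hb2]; field_simp; ring]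
    exact Real.sqrt_sq (by positivity)
  rw [h1c, hc]
  have hab : Real.sqrt v + Real.sqrt E ≠ 0 := by positivity
  field_simp
  linear_combination hr2 - hb2 + ha2

set_option maxHeartbeats 1000000 in
/-- Collapse of the double integral `I₄`:
`24 ∫_{E₀}^E (E−u)^{−1/2} ∫_{E₀}^u v⁻¹ arctan(√((u−v)/v)) Ψ(v) dv du
  = 24π ∫_{E₀}^E (√E/√v − 1) Ψ(v) v^{−1/2} dv`, all integrals converging. -/
theorem collapse_I4 (E₀ E : ℝ) (hE₀ : 0 < E₀) (hE : E₀ < E)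
    (Ψ : ℝ → ℝ) (hΨ : ContinuousOn Ψ (Icc E₀ E)) :
    (∀ u ∈ Ioc E₀ E,
      IntervalIntegrable
        (fun v => (1/v) * Real.arctan (Real.sqrt ((u - v) / v)) * Ψ v) volume E₀ u) ∧
    IntervalIntegrable
      (fun u => (∫ v in E₀..u, (1/v) * Real.arctan (Real.sqrt ((u - v) / v)) * Ψ v) /
        Real.sqrt (E - u)) volume E₀ E ∧
    IntervalIntegrable
      (fun v => (Real.sqrt E / Real.sqrt v - 1) * Ψ v / Real.sqrt v) volume E₀ E ∧
    (24 * ∫ u in E₀..E,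
        (∫ v in E₀..u, (1/v) * Real.arctan (Real.sqrt ((u - v) / v)) * Ψ v) /
          Real.sqrt (E - u))
      = 24 * π * ∫ v in E₀..E, (Real.sqrt E / Real.sqrt v - 1) * Ψ v / Real.sqrt v := by
  -- bound for Ψ
  obtain ⟨M, hM⟩ : ∃ M, ∀ v ∈ Icc E₀ E, ‖Ψ v‖ ≤ M :=
    IsCompact.exists_bound_of_continuousOn isCompact_Icc hΨ
  have hM0 : 0 ≤ M := le_trans (norm_nonneg _) (hM E₀ ⟨le_refl _, hE.le⟩)
  -- clamped continuous extension
  set cl : ℝ → ℝ := fun v => max (min v E) E₀ with hcl_def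
  have hclcont : Continuous cl := (continuous_id.min continuous_const).max continuous_const
  have hclmem : ∀ v, cl v ∈ Icc E₀ E :=
    fun v => ⟨le_max_right _ _, max_le (min_le_right _ _) hE.le⟩
  have hcleq : ∀ v ∈ Icc E₀ E, cl v = v := by
    intro v hv
    rw [hcl_def]
    simp only [min_eq_left hv.2, max_eq_left hv.1]
  set Ψc : ℝ → ℝ := fun v => Ψ (cl v) with hΨc_def
  have hΨccont : Continuous Ψc := hΨ.comp_continuous hclcont hclmem
  have hΨceq : ∀ v ∈ Icc E₀ E, Ψc v = Ψ v := fun v hv => by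
    show Ψ (cl v) = Ψ v
    rw [hcleq v hv]
  have hΨcbd : ∀ v ∈ Icc E₀ E, |Ψc v| ≤ M := by
    intro v hv; rw [hΨceq v hv]; exact hM v hv
  -- the (jointly continuous) kernel
  set m : ℝ → ℝ := fun v => max v E₀ with hm_def
  have hmpos : ∀ v, 0 < m v := fun v => lt_of_lt_of_le hE₀ (le_max_right _ _)
  have hmeq : ∀ v, E₀ ≤ v → m v = v := fun v hv => max_eq_left hv
  set g : ℝ → ℝ → ℝ :=
    fun u v => (1 / m v) * Real.arctan (Real.sqrt ((u - v) / m v)) * Ψc v with hg_def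
  have hgcont : Continuous (fun p : ℝ × ℝ => g p.1 p.2) := by
    have hmc : Continuous (fun p : ℝ × ℝ => m p.2) :=
      (continuous_snd.max continuous_const)
    have hmne : ∀ p : ℝ × ℝ, m p.2 ≠ 0 := fun p => (hmpos p.2).ne'
    exact ((continuous_const.div hmc hmne).mul
      (Real.continuous_arctan.comp (Real.continuous_sqrt.comp
        ((continuous_fst.sub continuous_snd).div hmc hmne)))).mul
      (hΨccont.comp continuous_snd)
  set C : ℝ := 1/E₀ * (π/2) * M with hC_def
  have hC0 : 0 ≤ C := by
    have := Real.pi_pos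
    positivity
  have hgbd : ∀ (u v : ℝ), v ∈ Icc E₀ E → |g u v| ≤ C := by
    intro u v hv
    have hv0 : 0 < v := lt_of_lt_of_le hE₀ hv.1
    have h1 : |1 / m v| ≤ 1/E₀ := by
      rw [hmeq v hv.1, abs_of_pos (by positivity), div_le_div_iff₀ hv0 hE₀]
      linarith [hv.1]
    have h2 : |Real.arctan (Real.sqrt ((u - v) / m v))| ≤ π/2 := by
      set x := Real.sqrt ((u - v) / m v)
      have ha := Real.arctan_lt_pi_div_two x
      have hb := Real.neg_pi_div_two_lt_arctan x
      rw [abs_le]; constructor <;> linarith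
    have h3 : |Ψc v| ≤ M := hΨcbd v hv
    rw [hg_def]
    simp only [abs_mul]
    rw [hC_def]
    have hpi : (0:ℝ) ≤ π/2 := by positivity
    exact mul_le_mul (mul_le_mul h1 h2 (abs_nonneg _) (by positivity)) h3 (abs_nonneg _)
      (by positivity)
  -- the triangle set and kernel
  set S : Set (ℝ × ℝ) := {p | E₀ < p.2 ∧ p.2 ≤ p.1 ∧ p.1 ≤ E} with hS_def
  have hS : MeasurableSet S :=
    (measurableSet_lt measurable_const measurable_snd).inter
      ((measurableSet_le measurable_snd measurable_fst).inter
        (measurableSet_le measurable_fst measurable_const))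
  set φ : ℝ × ℝ → ℝ := S.indicator (fun p => g p.1 p.2 / Real.sqrt (E - p.1)) with hφ_def
  set ν : Measure ℝ := volume.restrict (Ioc E₀ E) with hν_def
  -- integrability of 1/√(E-u)
  have hsqint : IntegrableOn (fun u => (Real.sqrt (E - u))⁻¹) (Ioc E₀ E) volume := by
    have base : IntervalIntegrable (fun x : ℝ => x ^ (-(1/2) : ℝ)) volume 0 (E - E₀) :=
      intervalIntegral.intervalIntegrable_rpow' (by norm_num)
    have comp := base.comp_sub_left E
    have hb1 : E - (E - E₀) = E₀ := by ring
    have hb2 : E - 0 = E := by ring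
    rw [hb1, hb2] at comp
    replace comp := comp.symm
    rw [intervalIntegrable_iff_integrableOn_Ioc_of_le hE.le] at comp
    refine comp.congr_fun (fun u hu => ?_) measurableSet_Ioc
    have h0 : (0:ℝ) ≤ E - u := by linarith [hu.2]
    rw [Real.sqrt_eq_rpow, ← Real.rpow_neg h0]
  -- the dominating function
  set B : ℝ × ℝ → ℝ :=
    fun p => (Real.sqrt (E - p.1))⁻¹ * (Ioc E₀ E).indicator (fun _ => C) p.2 with hB_def
  have hind : Integrable ((Ioc E₀ E).indicator (fun _ : ℝ => C)) volume := by
    have h1 : IntegrableOn (fun _ : ℝ => C) (Ioc E₀ E) volume :=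
      (integrableOn_const_iff).mpr (Or.inr measure_Ioc_lt_top)
    exact h1.integrable_indicator measurableSet_Ioc
  have hBint : Integrable B (ν.prod volume) := Integrable.mul_prod (L := ℝ) hsqint hind
  have hφmeas : AEStronglyMeasurable φ (ν.prod volume) := by
    refine AEStronglyMeasurable.indicator ?_ hS
    exact (hgcont.measurable.div
      (Real.continuous_sqrt.comp (continuous_const.sub continuous_fst)).measurable).aestronglyMeasurable
  have hφbnd : ∀ p : ℝ × ℝ, ‖φ p‖ ≤ B p := by
    intro p
    simp only [hφ_def, hB_def]
    by_cases hp : p ∈ S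
    · rw [Set.indicator_of_mem hp]
      have hp' : E₀ < p.2 ∧ p.2 ≤ p.1 ∧ p.1 ≤ E := hp
      obtain ⟨h1, h2, h3⟩ := hp'
      have hv : p.2 ∈ Icc E₀ E := ⟨le_of_lt h1, le_trans h2 h3⟩
      have hind : (Ioc E₀ E).indicator (fun _ => C) p.2 = C :=
        Set.indicator_of_mem (mem_Ioc.mpr ⟨h1, le_trans h2 h3⟩) _
      rw [hind, Real.norm_eq_abs, abs_div, abs_of_nonneg (Real.sqrt_nonneg _),
        div_eq_mul_inv, mul_comm]
      exact mul_le_mul_of_nonneg_left (hgbd p.1 p.2 hv) (inv_nonneg.mpr (Real.sqrt_nonneg _))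
    · rw [Set.indicator_of_notMem hp, norm_zero]
      exact mul_nonneg (inv_nonneg.mpr (Real.sqrt_nonneg _))
        (Set.indicator_nonneg (fun _ _ => hC0) _)
  have hφint : Integrable φ (ν.prod volume) :=
    Integrable.mono' hBint hφmeas (Filter.Eventually.of_forall hφbnd)
  -- claim 1
  have claim1 : ∀ u ∈ Ioc E₀ E, IntervalIntegrable
      (fun v => (1/v) * Real.arctan (Real.sqrt ((u - v) / v)) * Ψ v) volume E₀ u := by
    intro u hu
    have hsub : Icc E₀ u ⊆ Icc E₀ E := Icc_subset_Icc le_rfl hu.2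
    have hne : ∀ v ∈ Icc E₀ u, v ≠ 0 := fun v hv => (lt_of_lt_of_le hE₀ hv.1).ne'
    have hcont : ContinuousOn
        (fun v => (1/v) * Real.arctan (Real.sqrt ((u - v) / v)) * Ψ v) (Icc E₀ u) := by
      refine ContinuousOn.mul (ContinuousOn.mul ?_ ?_) (hΨ.mono hsub)
      · exact continuousOn_const.div continuousOn_id hne
      · exact Real.continuous_arctan.comp_continuousOn
          (Real.continuous_sqrt.comp_continuousOn
            ((continuousOn_const.sub continuousOn_id).div continuousOn_id hne))
    rw [← uIcc_of_le hu.1.le] at hcont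
    exact hcont.intervalIntegrable
  -- inner integral representation
  have fact_inner : ∀ u ∈ Ioc E₀ E,
      (∫ v in E₀..u, (1/v) * Real.arctan (Real.sqrt ((u - v) / v)) * Ψ v) / Real.sqrt (E - u)
        = ∫ v, φ (u, v) := by
    intro u hu
    have hfun : ∀ v, φ (u, v)
        = (Ioc E₀ u).indicator (fun v => g u v / Real.sqrt (E - u)) v := by
      intro v
      by_cases h : v ∈ Ioc E₀ u
      · rw [Set.indicator_of_mem h]
        exact Set.indicator_of_mem (show (u, v) ∈ S from ⟨h.1, h.2, hu.2⟩) _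
      · rw [Set.indicator_of_notMem h]
        refine Set.indicator_of_notMem (fun hmem => ?_) _
        have hmem' : E₀ < v ∧ v ≤ u ∧ u ≤ E := hmem
        exact h ⟨hmem'.1, hmem'.2.1⟩
    simp only [hfun]
    rw [MeasureTheory.integral_indicator measurableSet_Ioc,
      ← intervalIntegral.integral_of_le hu.1.le, intervalIntegral.integral_div]
    congr 1
    refine intervalIntegral.integral_congr fun v hv => ?_
    rw [uIcc_of_le hu.1.le] at hv
    have hv2 : v ∈ Icc E₀ E := ⟨hv.1, le_trans hv.2 hu.2⟩
    show _ = (1 / m v) * Real.arctan (Real.sqrt ((u - v) / m v)) * Ψc v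
    rw [hmeq v hv2.1, hΨceq v hv2]
  -- outer integral computation
  have fact_outer : ∀ v : ℝ, (∫ u, φ (u, v) ∂ν)
      = (Ioc E₀ E).indicator
          (fun v => π * (Real.sqrt E - Real.sqrt v) * ((1/v) * Ψ v)) v := by
    intro v
    by_cases hv : v ∈ Ioc E₀ E
    · rw [Set.indicator_of_mem hv]
      have hfun : ∀ u, φ (u, v)
          = (Icc v E).indicator (fun u => g u v / Real.sqrt (E - u)) u := by
        intro u
        by_cases h : u ∈ Icc v E
        · rw [Set.indicator_of_mem h]
          exact Set.indicator_of_mem (show (u, v) ∈ S from ⟨hv.1, h.1, h.2⟩) _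
        · rw [Set.indicator_of_notMem h]
          refine Set.indicator_of_notMem (fun hmem => ?_) _
          have hmem' : E₀ < v ∧ v ≤ u ∧ u ≤ E := hmem
          exact h ⟨hmem'.2.1, hmem'.2.2⟩
      simp only [hfun]
      rw [MeasureTheory.integral_indicator measurableSet_Icc, hν_def,
        Measure.restrict_restrict measurableSet_Icc]
      have hsub : Icc v E ∩ Ioc E₀ E = Icc v E :=
        inter_eq_left.mpr (fun u hu => ⟨lt_of_lt_of_le hv.1 hu.1, hu.2⟩)
      rw [hsub, MeasureTheory.integral_Icc_eq_integral_Ioc,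
        ← intervalIntegral.integral_of_le hv.2]
      have hvIcc : v ∈ Icc E₀ E := ⟨hv.1.le, hv.2⟩
      have hv0 : 0 < v := lt_trans hE₀ hv.1
      have hgv : ∀ u, g u v = (1/v) * Real.arctan (Real.sqrt ((u - v)/v)) * Ψ v := by
        intro u
        show (1 / m v) * Real.arctan (Real.sqrt ((u - v) / m v)) * Ψc v = _
        rw [hmeq v hvIcc.1, hΨceq v hvIcc]
      rcases eq_or_lt_of_le hv.2 with hveq | hvlt
      · rw [hveq, intervalIntegral.integral_same]
        simp
      · have step1 : (∫ u in v..E, g u v / Real.sqrt (E - u))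
            = ∫ u in v..E, ((1/v) * Ψ v)
                * (Real.arctan (Real.sqrt ((u - v)/v)) / Real.sqrt (E - u)) := by
          refine intervalIntegral.integral_congr fun u _ => ?_
          rw [hgv u]
          ring
        rw [step1, intervalIntegral.integral_const_mul, intK hv0 hvlt]
        ring
    · have hzero : ∀ u, φ (u, v) = 0 := by
        intro u
        refine Set.indicator_of_notMem (fun hmem => ?_) _
        have hmem' : E₀ < v ∧ v ≤ u ∧ u ≤ E := hmem
        exact hv ⟨hmem'.1, le_trans hmem'.2.1 hmem'.2.2⟩
      simp only [hzero, MeasureTheory.integral_zero, Set.indicator_of_notMem hv]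
  -- claim 2
  have hWint : Integrable (fun u => ∫ v, φ (u, v)) ν := hφint.integral_prod_left
  have claim2 : IntervalIntegrable
      (fun u => (∫ v in E₀..u, (1/v) * Real.arctan (Real.sqrt ((u - v) / v)) * Ψ v) /
        Real.sqrt (E - u)) volume E₀ E := by
    rw [intervalIntegrable_iff_integrableOn_Ioc_of_le hE.le]
    exact hWint.congr ((ae_restrict_iff' measurableSet_Ioc).mpr
      (Filter.Eventually.of_forall (fun u hu => (fact_inner u hu).symm)))
  -- claim 3
  have claim3 : IntervalIntegrable
      (fun v => (Real.sqrt E / Real.sqrt v - 1) * Ψ v / Real.sqrt v) volume E₀ E := by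
    have hne : ∀ v ∈ Icc E₀ E, Real.sqrt v ≠ 0 :=
      fun v hv => (Real.sqrt_pos.mpr (lt_of_lt_of_le hE₀ hv.1)).ne'
    have hcont : ContinuousOn
        (fun v => (Real.sqrt E / Real.sqrt v - 1) * Ψ v / Real.sqrt v) (Icc E₀ E) := by
      refine ContinuousOn.div (ContinuousOn.mul (ContinuousOn.sub ?_ continuousOn_const) hΨ)
        Real.continuous_sqrt.continuousOn hne
      exact continuousOn_const.div Real.continuous_sqrt.continuousOn hne
    rw [← uIcc_of_le hE.le] at hcont
    exact hcont.intervalIntegrable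
  refine ⟨claim1, claim2, claim3, ?_⟩
  -- final computation
  have hswap := MeasureTheory.integral_integral_swap (μ := ν) (ν := volume)
    (f := fun u v => φ (u, v)) hφint
  have hLHS : (∫ u in E₀..E,
      (∫ v in E₀..u, (1/v) * Real.arctan (Real.sqrt ((u - v) / v)) * Ψ v) /
        Real.sqrt (E - u))
      = π * ∫ v in E₀..E, (Real.sqrt E / Real.sqrt v - 1) * Ψ v / Real.sqrt v := by
    calc (∫ u in E₀..E,
        (∫ v in E₀..u, (1/v) * Real.arctan (Real.sqrt ((u - v) / v)) * Ψ v) /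
          Real.sqrt (E - u))
        = ∫ u in Ioc E₀ E,
            (∫ v in E₀..u, (1/v) * Real.arctan (Real.sqrt ((u - v) / v)) * Ψ v) /
              Real.sqrt (E - u) := intervalIntegral.integral_of_le hE.le
      _ = ∫ u, (∫ v, φ (u, v)) ∂ν := by
          refine integral_congr_ae ((ae_restrict_iff' measurableSet_Ioc).mpr
            (Filter.Eventually.of_forall (fun u hu => fact_inner u hu)))
      _ = ∫ v, ∫ u, φ (u, v) ∂ν := hswap
      _ = ∫ v, (Ioc E₀ E).indicator
            (fun v => π * (Real.sqrt E - Real.sqrt v) * ((1/v) * Ψ v)) v := by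
          simp only [fact_outer]
      _ = ∫ v in Ioc E₀ E, π * (Real.sqrt E - Real.sqrt v) * ((1/v) * Ψ v) :=
          MeasureTheory.integral_indicator measurableSet_Ioc
      _ = ∫ v in E₀..E, π * (Real.sqrt E - Real.sqrt v) * ((1/v) * Ψ v) :=
          (intervalIntegral.integral_of_le hE.le).symm
      _ = π * ∫ v in E₀..E, (Real.sqrt E / Real.sqrt v - 1) * Ψ v / Real.sqrt v := by
          rw [← intervalIntegral.integral_const_mul]
          refine intervalIntegral.integral_congr fun v hv => ?_
          rw [uIcc_of_le hE.le] at hv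
          have hv0 : 0 < v := lt_of_lt_of_le hE₀ hv.1
          have hsv : 0 < Real.sqrt v := Real.sqrt_pos.mpr hv0
          have hvv : Real.sqrt v * Real.sqrt v = v := Real.mul_self_sqrt hv0.le
          rw [show (1:ℝ)/v = 1/(Real.sqrt v * Real.sqrt v) by rw [hvv]]
          field_simp
  rw [hLHS]
  ring
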